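/- Let s, t ∈ ℝ with 0 ≤ s ≤ 4, t ≤ 2, and s ≥ t + 1. Then for all P, Q ∈ Γ_n with r ≤ p_i/q_i ≤ R for all i: ((r+1)/2)^{s−3} ((sr + 4 − s)/(4r^{t−2})) Φ_t(P||Q) ≤ ζ_s(P||Q) ≤ ((R+1)/2)^{s−3} ((sR + 4 − s)/(4R^{t−2})) Φ_t(P||Q). -/

import Mathlib

open Real Finset

/-- Relative information of type `s` (generalized Kullback-Leibler divergence). -/
noncomputable def Phi (n : ℕ) (s : ℝ) (p q : Fin n → ℝ) : ℝ :=
  if s = 0 then ∑ i, q i * Real.log (q i / p i)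
  else if s = 1 then ∑ i, p i * Real.log (p i / q i)
  else (s * (s - 1))⁻¹ * ((∑ i, (p i) ^ s * (q i) ^ (1 - s)) - 1)

/-- Unified relative JS and AG divergence of type `s`. -/
noncomputable def Omega (n : ℕ) (s : ℝ) (p q : Fin n → ℝ) : ℝ :=
  if s = 0 then ∑ i, p i * Real.log (2 * p i / (p i + q i))
  else if s = 1 then ∑ i, ((p i + q i) / 2) * Real.log ((p i + q i) / (2 * p i))
  else (s * (s - 1))⁻¹ * ((∑ i, p i * ((p i + q i) / (2 * p i)) ^ s) - 1)

/-- Relative J-divergence of type `s`. -/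
noncomputable def zeta (n : ℕ) (s : ℝ) (p q : Fin n → ℝ) : ℝ :=
  if s = 1 then ∑ i, (p i - q i) * Real.log ((p i + q i) / (2 * q i))
  else (s - 1)⁻¹ * ∑ i, (p i - q i) * ((p i + q i) / (2 * q i)) ^ (s - 1)

/-! ### Auxiliary pointwise functions -/

noncomputable def psiF (s x : ℝ) : ℝ :=
  if s = 1 then (x-1) * Real.log ((x+1)/2) else (x-1) * ((x+1)/2) ^ (s-1) / (s-1)

noncomputable def psiD (s x : ℝ) : ℝ :=
  if s = 1 then Real.log ((x+1)/2) + (x-1)/(x+1)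
  else ((x+1)/2) ^ (s-1) / (s-1) + (x-1) * ((x+1)/2) ^ (s-2) / 2

noncomputable def psiDD (s x : ℝ) : ℝ := ((x+1)/2) ^ (s-3) * (s*x+4-s) / 4

noncomputable def phiF (t x : ℝ) : ℝ :=
  if t = 0 then -Real.log x else if t = 1 then x * Real.log x else (x ^ t - 1) / (t*(t-1))

noncomputable def phiD (t x : ℝ) : ℝ :=
  if t = 0 then -x⁻¹ else if t = 1 then Real.log x + 1 else x ^ (t-1) / (t-1)

noncomputable def phiDD (t x : ℝ) : ℝ := x ^ (t-2)

noncomputable def hfun (s t x : ℝ) : ℝ := ((x+1)/2)^(s-3) * (s*x+4-s) * x^(2-t) / 4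

noncomputable def hder (s t x : ℝ) : ℝ :=
  ((x+1)/2)^(s-4) * x^(2-t-1) *
    (s*(s-t)*x^2 + (8*s - s^2 - 4 - 4*t)*x + (2-t)*(4-s)) / 8

lemma half_pos' {x : ℝ} (hx : 0 < x) : (0:ℝ) < (x+1)/2 := by linarith

lemma hasDerivAt_half {x : ℝ} : HasDerivAt (fun y : ℝ => (y+1)/2) (1/2) x := by
  simpa using ((hasDerivAt_id' (x := x)).add_const 1).div_const 2

lemma rpow_shift {u : ℝ} (hu : 0 < u) (a : ℝ) : u ^ a = u ^ (a-1) * u := by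
  rw [← Real.rpow_add_one hu.ne' (a-1)]; ring_nf

/-! ### Derivative lemmas -/

lemma hasDerivAt_psiF {s x : ℝ} (hx : 0 < x) : HasDerivAt (psiF s) (psiD s x) x := by
  have hu : (0:ℝ) < (x+1)/2 := half_pos' hx
  by_cases hs : s = 1
  · subst hs
    have hlog : HasDerivAt (fun y : ℝ => Real.log ((y+1)/2)) ((1/2) / ((x+1)/2)) x :=
      hasDerivAt_half.log hu.ne'
    have hfe : psiF 1 = fun y => (y-1) * Real.log ((y+1)/2) := by
      funext y; simp [psiF]
    have hde : psiD 1 x = 1 * Real.log ((x+1)/2) + (x-1) * ((1/2) / ((x+1)/2)) := by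
      rw [psiD, if_pos rfl]
      have : x + 1 ≠ 0 := by positivity
      field_simp
    rw [hfe, hde]
    exact ((hasDerivAt_id' (x := x)).sub_const 1).mul hlog
  · have hpow : HasDerivAt (fun y : ℝ => ((y+1)/2) ^ (s-1)) ((1/2) * (s-1) * ((x+1)/2) ^ (s-1-1)) x :=
      hasDerivAt_half.rpow_const (Or.inl hu.ne')
    have hfe : psiF s = fun y => (y-1) * ((y+1)/2) ^ (s-1) / (s-1) := by
      funext y; simp [psiF, hs]
    have hde : psiD s x =
        (1 * ((x+1)/2) ^ (s-1) + (x-1) * ((1/2) * (s-1) * ((x+1)/2) ^ (s-1-1))) / (s-1) := by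
      simp only [psiD, if_neg hs]
      rw [show s-1-1 = s-2 by ring]
      have hs1 : s - 1 ≠ 0 := sub_ne_zero.mpr hs
      field_simp
    rw [hfe, hde]
    exact (((hasDerivAt_id' (x := x)).sub_const 1).mul hpow).div_const (s-1)

lemma hasDerivAt_psiD {s x : ℝ} (hx : 0 < x) : HasDerivAt (psiD s) (psiDD s x) x := by
  have hu : (0:ℝ) < (x+1)/2 := half_pos' hx
  have hx1 : x + 1 ≠ 0 := by positivity
  by_cases hs : s = 1
  · subst hs
    have hlog : HasDerivAt (fun y : ℝ => Real.log ((y+1)/2)) ((1/2) / ((x+1)/2)) x :=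
      hasDerivAt_half.log hu.ne'
    have hq : HasDerivAt (fun y : ℝ => (y-1)/(y+1))
        ((1*(x+1) - (x-1)*1)/(x+1)^2) x :=
      ((hasDerivAt_id' (x := x)).sub_const 1).div ((hasDerivAt_id' (x := x)).add_const 1) hx1
    have hfe : psiD 1 = fun y => Real.log ((y+1)/2) + (y-1)/(y+1) := by
      funext y; simp [psiD]
    have hde : psiDD 1 x = (1/2) / ((x+1)/2) + (1*(x+1) - (x-1)*1)/(x+1)^2 := by
      simp only [psiDD]
      rw [show (1:ℝ)-3 = -2 by norm_num, Real.rpow_neg hu.le,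
        show ((x+1)/2 : ℝ) ^ (2:ℝ) = ((x+1)/2)^(2:ℕ) by
          rw [← Real.rpow_natCast]; norm_num]
      field_simp
      ring
    rw [hfe, hde]
    exact hlog.add hq
  · have hfe : psiD s = fun y => ((y+1)/2) ^ (s-1) / (s-1) + (y-1) * ((y+1)/2) ^ (s-2) / 2 := by
      funext y; simp [psiD, hs]
    have hs1 : s - 1 ≠ 0 := sub_ne_zero.mpr hs
    have hde : psiDD s x = (1/2) * (s-1) * ((x+1)/2) ^ (s-1-1) / (s-1) +
        (1 * ((x+1)/2) ^ (s-2) + (x-1) * ((1/2) * (s-2) * ((x+1)/2) ^ (s-2-1))) / 2 := by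
      simp only [psiDD]
      rw [show s-1-1 = s-2 by ring, show s-2-1 = s-3 by ring, rpow_shift hu (s-2),
        show s-2-1 = s-3 by ring]
      field_simp
      ring
    rw [hfe, hde]
    exact ((hasDerivAt_half.rpow_const (Or.inl hu.ne')).div_const (s-1)).add
      ((((hasDerivAt_id' (x := x)).sub_const 1).mul
        (hasDerivAt_half.rpow_const (Or.inl hu.ne'))).div_const 2)

lemma hasDerivAt_phiF {t x : ℝ} (hx : 0 < x) : HasDerivAt (phiF t) (phiD t x) x := by
  by_cases ht0 : t = 0
  · subst ht0
    have hfe : phiF 0 = fun y => -Real.log y := by funext y; simp [phiF]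
    have hde : phiD 0 x = -x⁻¹ := by simp [phiD]
    rw [hfe, hde]
    exact (Real.hasDerivAt_log hx.ne').neg
  by_cases ht1 : t = 1
  · subst ht1
    have hfe : phiF 1 = fun y => y * Real.log y := by funext y; simp [phiF]
    have hde : phiD 1 x = 1 * Real.log x + x * x⁻¹ := by
      simp [phiD]; field_simp
    rw [hfe, hde]
    exact (hasDerivAt_id' (x := x)).mul (Real.hasDerivAt_log hx.ne')
  · have hfe : phiF t = fun y => (y ^ t - 1) / (t*(t-1)) := by funext y; simp [phiF, ht0, ht1]
    have ht1' : t - 1 ≠ 0 := sub_ne_zero.mpr ht1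
    have hde : phiD t x = t * x ^ (t-1) / (t*(t-1)) := by
      simp only [phiD, if_neg ht0, if_neg ht1]
      field_simp
    rw [hfe, hde]
    exact ((Real.hasDerivAt_rpow_const (p := t) (Or.inl hx.ne')).sub_const 1).div_const (t*(t-1))

lemma hasDerivAt_phiD {t x : ℝ} (hx : 0 < x) : HasDerivAt (phiD t) (phiDD t x) x := by
  by_cases ht0 : t = 0
  · subst ht0
    have hfe : phiD 0 = fun y => -y⁻¹ := by funext y; simp [phiD]
    have hde : phiDD 0 x = -(-(x^2)⁻¹) := by
      simp only [phiDD]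
      rw [show (0:ℝ)-2 = -2 by norm_num, Real.rpow_neg hx.le,
        show (x:ℝ) ^ (2:ℝ) = x^(2:ℕ) by rw [← Real.rpow_natCast]; norm_num]
      ring
    rw [hfe, hde]
    exact (hasDerivAt_inv hx.ne').neg
  by_cases ht1 : t = 1
  · subst ht1
    have hfe : phiD 1 = fun y => Real.log y + 1 := by funext y; simp [phiD]
    have hde : phiDD 1 x = x⁻¹ := by
      simp only [phiDD]
      rw [show (1:ℝ)-2 = -1 by norm_num, Real.rpow_neg hx.le, Real.rpow_one]
    rw [hfe, hde]
    exact (Real.hasDerivAt_log hx.ne').add_const 1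
  · have hfe : phiD t = fun y => y ^ (t-1) / (t-1) := by funext y; simp [phiD, ht0, ht1]
    have ht1' : t - 1 ≠ 0 := sub_ne_zero.mpr ht1
    have hde : phiDD t x = (t-1) * x ^ (t-1-1) / (t-1) := by
      simp only [phiDD]
      rw [show t-1-1 = t-2 by ring]
      field_simp
    rw [hfe, hde]
    exact (Real.hasDerivAt_rpow_const (p := t-1) (Or.inl hx.ne')).div_const (t-1)

lemma hasDerivAt_hfun {s t x : ℝ} (hx : 0 < x) : HasDerivAt (hfun s t) (hder s t x) x := by
  have hu : (0:ℝ) < (x+1)/2 := half_pos' hx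
  have h1 : HasDerivAt (fun y : ℝ => ((y+1)/2)^(s-3)) ((1/2)*(s-3)*((x+1)/2)^(s-3-1)) x :=
    hasDerivAt_half.rpow_const (Or.inl hu.ne')
  have h2 : HasDerivAt (fun y : ℝ => s*y+4-s) s x := by
    have h := ((hasDerivAt_id' (x := x)).const_mul s).sub_const (s-4)
    have he : (fun y : ℝ => s*y+4-s) = fun y : ℝ => s*y - (s-4) := by funext y; ring
    rw [he]; simpa using h
  have h3 : HasDerivAt (fun y : ℝ => y^(2-t)) ((2-t)*x^(2-t-1)) x :=
    Real.hasDerivAt_rpow_const (Or.inl hx.ne')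
  have h := (((h1.mul h2).mul h3).div_const 4)
  have hfe : hfun s t = fun y => ((y+1)/2)^(s-3) * (s*y+4-s) * y^(2-t) / 4 := by
    funext y; rfl
  have hde : hder s t x =
      (((1/2)*(s-3)*((x+1)/2)^(s-3-1) * (s*x+4-s) + ((x+1)/2)^(s-3) * s) * x^(2-t)
        + ((x+1)/2)^(s-3) * (s*x+4-s) * ((2-t)*x^(2-t-1))) / 4 := by
    rw [show s-3-1 = s-4 by ring, rpow_shift hu (s-3), show s-3-1 = s-4 by ring,
      rpow_shift hx (2-t)]
    unfold hder
    ring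
  rw [hfe, hde]
  exact h

lemma hder_nonneg {s t x : ℝ} (hs0 : 0 ≤ s) (hs4 : s ≤ 4) (ht : t ≤ 2) (hst : t + 1 ≤ s)
    (hx : 0 < x) : 0 ≤ hder s t x := by
  have hu : (0:ℝ) < (x+1)/2 := half_pos' hx
  have c2 : 0 ≤ s*(s-t) := mul_nonneg hs0 (by linarith)
  have c1 : 0 ≤ 8*s - s^2 - 4 - 4*t := by nlinarith
  have c0 : 0 ≤ (2-t)*(4-s) := mul_nonneg (by linarith) (by linarith)
  have hP : 0 ≤ s*(s-t)*x^2 + (8*s - s^2 - 4 - 4*t)*x + (2-t)*(4-s) := by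
    have := mul_nonneg c2 (sq_nonneg x)
    have := mul_nonneg c1 hx.le
    linarith
  unfold hder
  have := Real.rpow_pos_of_pos hu (s-4)
  have := Real.rpow_pos_of_pos hx (2-t-1)
  positivity

/-! ### Monotonicity helpers -/

lemma mono_aux {f f' : ℝ → ℝ} {a b : ℝ} (ha : 0 < a)
    (hf : ∀ x, 0 < x → HasDerivAt f (f' x) x)
    (hpos : ∀ x, a ≤ x → x ≤ b → 0 ≤ f' x) : MonotoneOn f (Set.Icc a b) := by
  apply monotoneOn_of_deriv_nonneg (convex_Icc a b)
  · intro x hx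
    exact (hf x (lt_of_lt_of_le ha hx.1)).continuousAt.continuousWithinAt
  · rw [interior_Icc]
    intro x hx
    exact (hf x (ha.trans hx.1)).differentiableAt.differentiableWithinAt
  · rw [interior_Icc]
    intro x hx
    rw [(hf x (ha.trans hx.1)).deriv]
    exact hpos x hx.1.le hx.2.le

lemma anti_aux {f f' : ℝ → ℝ} {a b : ℝ} (ha : 0 < a)
    (hf : ∀ x, 0 < x → HasDerivAt f (f' x) x)
    (hneg : ∀ x, a ≤ x → x ≤ b → f' x ≤ 0) : AntitoneOn f (Set.Icc a b) := by
  apply antitoneOn_of_deriv_nonpos (convex_Icc a b)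
  · intro x hx
    exact (hf x (lt_of_lt_of_le ha hx.1)).continuousAt.continuousWithinAt
  · rw [interior_Icc]
    intro x hx
    exact (hf x (ha.trans hx.1)).differentiableAt.differentiableWithinAt
  · rw [interior_Icc]
    intro x hx
    rw [(hf x (ha.trans hx.1)).deriv]
    exact hneg x hx.1.le hx.2.le

lemma hfun_mono {s t a b : ℝ} (hs0 : 0 ≤ s) (hs4 : s ≤ 4) (ht : t ≤ 2) (hst : t + 1 ≤ s)
    (ha : 0 < a) (hab : a ≤ b) : hfun s t a ≤ hfun s t b := by
  have := mono_aux (f := hfun s t) (f' := hder s t) (b := b) ha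
    (fun x hx => hasDerivAt_hfun hx)
    (fun x hax _ => hder_nonneg hs0 hs4 ht hst (lt_of_lt_of_le ha hax))
  exact this (Set.left_mem_Icc.mpr hab) (Set.right_mem_Icc.mpr hab) hab

/-- Tangent-line inequality for functions with nonnegative second derivative on `[r,R]`. -/
lemma tangent {F F' F'' : ℝ → ℝ} {r R : ℝ} (hr : 0 < r) (h1r : r ≤ 1) (h1R : 1 ≤ R)
    (hF : ∀ x, 0 < x → HasDerivAt F (F' x) x)
    (hF' : ∀ x, 0 < x → HasDerivAt F' (F'' x) x)
    (hF'' : ∀ x, r ≤ x → x ≤ R → 0 ≤ F'' x) :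
    ∀ x, r ≤ x → x ≤ R → F 1 + F' 1 * (x - 1) ≤ F x := by
  have hmF' : MonotoneOn F' (Set.Icc r R) := mono_aux hr hF' hF''
  set G : ℝ → ℝ := fun y => F y - F' 1 * (y - 1) with hG
  have hG' : ∀ x, 0 < x → HasDerivAt G (F' x - F' 1) x := by
    intro x hx
    have h : HasDerivAt (fun y => F y - F' 1 * (y - 1)) (F' x - F' 1 * 1) x := (hF x hx).sub (((hasDerivAt_id' (x := x)).sub_const 1).const_mul (F' 1))
    rw [mul_one] at h; exact h
  have h1m : (1:ℝ) ∈ Set.Icc r R := ⟨h1r, h1R⟩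
  have hup : MonotoneOn G (Set.Icc 1 R) :=
    mono_aux one_pos hG' (fun x h1x hxR =>
      sub_nonneg.mpr (hmF' h1m ⟨h1r.trans h1x, hxR⟩ h1x))
  have hdn : AntitoneOn G (Set.Icc r 1) :=
    anti_aux hr hG' (fun x hrx hx1 =>
      sub_nonpos.mpr (hmF' ⟨hrx, hx1.trans h1R⟩ h1m hx1))
  have hG1 : G 1 = F 1 := by simp [hG]
  intro x hrx hxR
  rcases le_total x 1 with h | h
  · have := hdn ⟨hrx, h⟩ ⟨h1r, le_refl 1⟩ h
    rw [hG1] at this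
    have hx' : G x = F x - F' 1 * (x - 1) := rfl
    linarith [this, hx'.symm.le]
  · have := hup ⟨le_refl 1, h1R⟩ ⟨h, hxR⟩ h
    rw [hG1] at this
    have hx' : G x = F x - F' 1 * (x - 1) := rfl
    linarith [this, hx'.symm.le]

/-! ### Sum identities -/

variable {n : ℕ} {p q : Fin n → ℝ}

lemma psiF_one' (x : ℝ) : psiF 1 x = (x-1) * Real.log ((x+1)/2) := by simp [psiF]

lemma psiF_ne {s : ℝ} (hs : s ≠ 1) (x : ℝ) :
    psiF s x = (x-1) * ((x+1)/2) ^ (s-1) / (s-1) := by simp [psiF, hs]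

lemma phiF_zero' (x : ℝ) : phiF 0 x = -Real.log x := by simp [phiF]

lemma phiF_one' (x : ℝ) : phiF 1 x = x * Real.log x := by simp [phiF]

lemma phiF_ne {t : ℝ} (ht0 : t ≠ 0) (ht1 : t ≠ 1) (x : ℝ) :
    phiF t x = (x ^ t - 1) / (t*(t-1)) := by simp [phiF, ht0, ht1]

lemma zeta_eq (s : ℝ) (hp : ∀ i, 0 < p i) (hq : ∀ i, 0 < q i) :
    zeta n s p q = ∑ i, q i * psiF s (p i / q i) := by
  have harg : ∀ i, (p i + q i) / (2 * q i) = (p i / q i + 1) / 2 := by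
    intro i
    rw [div_add_one (hq i).ne', div_div, mul_comm]
  have hdiff : ∀ i, p i - q i = q i * (p i / q i - 1) := by
    intro i
    have := (hq i).ne'
    field_simp
  by_cases hs : s = 1
  · subst hs
    simp only [zeta, if_pos rfl]
    refine Finset.sum_congr rfl fun i _ => ?_
    rw [psiF_one', harg i, hdiff i]
    ring
  · simp only [zeta, if_neg hs, Finset.mul_sum]
    refine Finset.sum_congr rfl fun i _ => ?_
    rw [psiF_ne hs, harg i, hdiff i]
    have hs1 : s - 1 ≠ 0 := sub_ne_zero.mpr hs
    field_simp

lemma Phi_eq (t : ℝ) (hp : ∀ i, 0 < p i) (hq : ∀ i, 0 < q i) (hq1 : ∑ i, q i = 1) :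
    Phi n t p q = ∑ i, q i * phiF t (p i / q i) := by
  by_cases ht0 : t = 0
  · subst ht0
    simp only [Phi, if_pos rfl]
    refine Finset.sum_congr rfl fun i _ => ?_
    rw [phiF_zero', show q i / p i = (p i / q i)⁻¹ by rw [inv_div], Real.log_inv]
  by_cases ht1 : t = 1
  · subst ht1
    simp only [Phi, if_neg one_ne_zero, if_pos rfl]
    refine Finset.sum_congr rfl fun i _ => ?_
    rw [phiF_one', ← mul_assoc, show q i * (p i / q i) = p i by
      rw [mul_comm, div_mul_cancel₀ _ (hq i).ne']]
  · simp only [Phi, if_neg ht0, if_neg ht1]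
    have hterm : ∀ i, (p i) ^ t * (q i) ^ (1-t) = q i * (p i / q i) ^ t := by
      intro i
      rw [Real.div_rpow (hp i).le (hq i).le, Real.rpow_sub (hq i), Real.rpow_one]
      have : (q i : ℝ) ^ t ≠ 0 := (Real.rpow_pos_of_pos (hq i) t).ne'
      field_simp
    calc (t * (t - 1))⁻¹ * ((∑ i, (p i) ^ t * (q i) ^ (1-t)) - 1)
        = (t*(t-1))⁻¹ * (∑ i, q i * (p i / q i) ^ t) - (t*(t-1))⁻¹ * (∑ i, q i) := by
          rw [Finset.sum_congr rfl fun i _ => hterm i, hq1]; ring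
      _ = ∑ i, ((t*(t-1))⁻¹ * (q i * (p i / q i) ^ t) - (t*(t-1))⁻¹ * q i) := by
          rw [Finset.sum_sub_distrib, Finset.mul_sum, Finset.mul_sum]
      _ = ∑ i, q i * phiF t (p i / q i) := by
          refine Finset.sum_congr rfl fun i _ => ?_
          rw [phiF_ne ht0 ht1]
          field_simp

lemma psiF_one (s : ℝ) : psiF s 1 = 0 := by
  unfold psiF; split <;> simp

lemma phiF_one (t : ℝ) : phiF t 1 = 0 := by
  unfold phiF
  split
  · simp
  · split
    · simp
    · simp [Real.one_rpow]

/-! ### Generic bounds -/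

lemma lower_aux (s t : ℝ) (hp : ∀ i, 0 < p i) (hq : ∀ i, 0 < q i)
    (hp1 : ∑ i, p i = 1) (hq1 : ∑ i, q i = 1)
    {r R c : ℝ} (hr : 0 < r) (h1r : r ≤ 1) (h1R : 1 ≤ R)
    (hbound : ∀ i, r ≤ p i / q i ∧ p i / q i ≤ R)
    (hc : ∀ x, r ≤ x → x ≤ R → c * phiDD t x ≤ psiDD s x) :
    c * Phi n t p q ≤ zeta n s p q := by
  set F : ℝ → ℝ := fun x => psiF s x - c * phiF t x with hFdef
  set F' : ℝ → ℝ := fun x => psiD s x - c * phiD t x with hF'def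
  have hF : ∀ x, 0 < x → HasDerivAt F (F' x) x := fun x hx =>
    (hasDerivAt_psiF hx).sub ((hasDerivAt_phiF hx).const_mul c)
  have hF' : ∀ x, 0 < x → HasDerivAt F' (psiDD s x - c * phiDD t x) x := fun x hx =>
    (hasDerivAt_psiD hx).sub ((hasDerivAt_phiD hx).const_mul c)
  have htan := tangent hr h1r h1R hF hF'
    (fun x hrx hxR => sub_nonneg.mpr (hc x hrx hxR))
  have hF1 : F 1 = 0 := by simp [hFdef, psiF_one, phiF_one]
  set K : ℝ := F' 1 with hK
  have hsum1 : ∑ i, q i * (p i / q i) = 1 := by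
    rw [← hp1]
    exact Finset.sum_congr rfl fun i _ => by
      rw [mul_comm, div_mul_cancel₀ _ (hq i).ne']
  have hi : ∀ i ∈ Finset.univ, q i * (K * (p i / q i - 1)) ≤
      q i * (psiF s (p i / q i) - c * phiF t (p i / q i)) := by
    intro i _
    apply mul_le_mul_of_nonneg_left _ (hq i).le
    have h := htan (p i / q i) (hbound i).1 (hbound i).2
    rw [hF1] at h
    simpa [hFdef] using h
  have hsumineq := Finset.sum_le_sum hi
  have hL : ∑ i, q i * (K * (p i / q i - 1)) = 0 := by
    have he : ∀ i, q i * (K * (p i / q i - 1)) = K * (q i * (p i / q i)) - K * q i := by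
      intro i; ring
    rw [Finset.sum_congr rfl fun i _ => he i, Finset.sum_sub_distrib,
      ← Finset.mul_sum, ← Finset.mul_sum, hsum1, hq1]
    ring
  have hR : ∑ i, q i * (psiF s (p i / q i) - c * phiF t (p i / q i)) =
      zeta n s p q - c * Phi n t p q := by
    have he : ∀ i, q i * (psiF s (p i / q i) - c * phiF t (p i / q i)) =
        q i * psiF s (p i / q i) - c * (q i * phiF t (p i / q i)) := by
      intro i; ring
    rw [Finset.sum_congr rfl fun i _ => he i, Finset.sum_sub_distrib, ← Finset.mul_sum,
      ← zeta_eq s hp hq, ← Phi_eq t hp hq hq1]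
  rw [hL, hR] at hsumineq
  linarith

lemma upper_aux (s t : ℝ) (hp : ∀ i, 0 < p i) (hq : ∀ i, 0 < q i)
    (hp1 : ∑ i, p i = 1) (hq1 : ∑ i, q i = 1)
    {r R c : ℝ} (hr : 0 < r) (h1r : r ≤ 1) (h1R : 1 ≤ R)
    (hbound : ∀ i, r ≤ p i / q i ∧ p i / q i ≤ R)
    (hc : ∀ x, r ≤ x → x ≤ R → psiDD s x ≤ c * phiDD t x) :
    zeta n s p q ≤ c * Phi n t p q := by
  set F : ℝ → ℝ := fun x => c * phiF t x - psiF s x with hFdef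
  set F' : ℝ → ℝ := fun x => c * phiD t x - psiD s x with hF'def
  have hF : ∀ x, 0 < x → HasDerivAt F (F' x) x := fun x hx =>
    ((hasDerivAt_phiF hx).const_mul c).sub (hasDerivAt_psiF hx)
  have hF' : ∀ x, 0 < x → HasDerivAt F' (c * phiDD t x - psiDD s x) x := fun x hx =>
    ((hasDerivAt_phiD hx).const_mul c).sub (hasDerivAt_psiD hx)
  have htan := tangent hr h1r h1R hF hF'
    (fun x hrx hxR => sub_nonneg.mpr (hc x hrx hxR))
  have hF1 : F 1 = 0 := by simp [hFdef, psiF_one, phiF_one]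
  set K : ℝ := F' 1 with hK
  have hsum1 : ∑ i, q i * (p i / q i) = 1 := by
    rw [← hp1]
    exact Finset.sum_congr rfl fun i _ => by
      rw [mul_comm, div_mul_cancel₀ _ (hq i).ne']
  have hi : ∀ i ∈ Finset.univ, q i * (K * (p i / q i - 1)) ≤
      q i * (c * phiF t (p i / q i) - psiF s (p i / q i)) := by
    intro i _
    apply mul_le_mul_of_nonneg_left _ (hq i).le
    have h := htan (p i / q i) (hbound i).1 (hbound i).2
    rw [hF1] at h
    simpa [hFdef] using h
  have hsumineq := Finset.sum_le_sum hi
  have hL : ∑ i, q i * (K * (p i / q i - 1)) = 0 := by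
    have he : ∀ i, q i * (K * (p i / q i - 1)) = K * (q i * (p i / q i)) - K * q i := by
      intro i; ring
    rw [Finset.sum_congr rfl fun i _ => he i, Finset.sum_sub_distrib,
      ← Finset.mul_sum, ← Finset.mul_sum, hsum1, hq1]
    ring
  have hR : ∑ i, q i * (c * phiF t (p i / q i) - psiF s (p i / q i)) =
      c * Phi n t p q - zeta n s p q := by
    have he : ∀ i, q i * (c * phiF t (p i / q i) - psiF s (p i / q i)) =
        c * (q i * phiF t (p i / q i)) - q i * psiF s (p i / q i) := by
      intro i; ring
    rw [Finset.sum_congr rfl fun i _ => he i, Finset.sum_sub_distrib, ← Finset.mul_sum,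
      ← zeta_eq s hp hq, ← Phi_eq t hp hq hq1]
  rw [hL, hR] at hsumineq
  linarith

lemma psiDD_eq_hfun_mul {s t x : ℝ} (hx : 0 < x) :
    psiDD s x = hfun s t x * phiDD t x := by
  unfold psiDD hfun phiDD
  have h1 : x ^ (2-t) * x ^ (t-2) = 1 := by
    rw [← Real.rpow_add hx]
    norm_num
  calc ((x+1)/2) ^ (s-3) * (s*x+4-s) / 4
      = ((x+1)/2) ^ (s-3) * (s*x+4-s) / 4 * (x ^ (2-t) * x ^ (t-2)) := by rw [h1]; ring
    _ = ((x+1)/2)^(s-3) * (s*x+4-s) * x^(2-t) / 4 * x ^ (t-2) := by ring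

theorem stmt_7 (s t : ℝ) (hs0 : 0 ≤ s) (hs4 : s ≤ 4) (ht : t ≤ 2) (hst : t + 1 ≤ s)
    (n : ℕ) (hn : 2 ≤ n) (p q : Fin n → ℝ)
    (hp : ∀ i, 0 < p i) (hq : ∀ i, 0 < q i)
    (hp1 : ∑ i, p i = 1) (hq1 : ∑ i, q i = 1)
    (r R : ℝ) (hr : 0 < r) (hrR : r ≤ R)
    (hbound : ∀ i, r ≤ p i / q i ∧ p i / q i ≤ R) :
    ((r + 1) / 2) ^ (s - 3) * ((s * r + 4 - s) / (4 * r ^ (t - 2))) * Phi n t p q ≤ zeta n s p q ∧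
      zeta n s p q ≤ ((R + 1) / 2) ^ (s - 3) * ((s * R + 4 - s) / (4 * R ^ (t - 2))) * Phi n t p q := by
  have hR0 : 0 < R := lt_of_lt_of_le hr hrR
  have hsum1 : ∑ i, q i * (p i / q i) = 1 := by
    rw [← hp1]
    exact Finset.sum_congr rfl fun i _ => by
      rw [mul_comm, div_mul_cancel₀ _ (hq i).ne']
  have h1r : r ≤ 1 := by
    have h := Finset.sum_le_sum (fun i (_ : i ∈ Finset.univ) =>
      mul_le_mul_of_nonneg_left (hbound i).1 (hq i).le)
    rw [hsum1] at h
    have h2 : ∑ i, q i * r = r := by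
      rw [← Finset.sum_mul, hq1, one_mul]
    linarith [h2 ▸ h]
  have h1R : 1 ≤ R := by
    have h := Finset.sum_le_sum (fun i (_ : i ∈ Finset.univ) =>
      mul_le_mul_of_nonneg_left (hbound i).2 (hq i).le)
    rw [hsum1] at h
    have h2 : ∑ i, q i * R = R := by
      rw [← Finset.sum_mul, hq1, one_mul]
    linarith [h2 ▸ h]
  have hco : ∀ a : ℝ, 0 < a →
      ((a + 1) / 2) ^ (s - 3) * ((s * a + 4 - s) / (4 * a ^ (t - 2))) = hfun s t a := by
    intro a ha
    unfold hfun
    rw [show (2:ℝ) - t = -(t - 2) by ring, Real.rpow_neg ha.le]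
    have h2 : (a:ℝ) ^ (t - 2) ≠ 0 := (Real.rpow_pos_of_pos ha _).ne'
    have h3 : (s * a + 4 - s) / (4 * a ^ (t - 2)) = (s * a + 4 - s) * (a ^ (t - 2))⁻¹ / 4 := by
      rw [div_eq_mul_inv, mul_inv]
      ring
    rw [h3]
    ring
  constructor
  · rw [hco r hr]
    apply lower_aux s t hp hq hp1 hq1 hr h1r h1R hbound
    intro x hrx hxR
    have hx : 0 < x := lt_of_lt_of_le hr hrx
    rw [psiDD_eq_hfun_mul (t := t) hx]
    exact mul_le_mul_of_nonneg_right (hfun_mono hs0 hs4 ht hst hr hrx)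
      (Real.rpow_nonneg hx.le _)
  · rw [hco R hR0]
    apply upper_aux s t hp hq hp1 hq1 hr h1r h1R hbound
    intro x hrx hxR
    have hx : 0 < x := lt_of_lt_of_le hr hrx
    rw [psiDD_eq_hfun_mul (t := t) hx]
    exact mul_le_mul_of_nonneg_right (hfun_mono hs0 hs4 ht hst hx hxR)
      (Real.rpow_nonneg hx.le _)
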